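/- For every idempotent f of the sandwich semigroup (IS_n, *), the two-sided principal ideal IS_n * f * IS_n = {x * f * y : x, y ∈ IS_n} equals {a ∈ IS_n : rank(a) ≤ rank(f)}. -/

import Mathlib

open Equiv

/-- `IS n` : the symmetric inverse semigroup on `{1,…,n}`, modeled as partial
equivalences of `Fin n`.  Composition is left-to-right: `(x.trans y) t = y (x t)`. -/
abbrev IS (n : ℕ) := PEquiv (Fin n) (Fin n)

/-- The domain of a partial injective transformation. -/
def sdom {n : ℕ} (x : IS n) : Set (Fin n) := {a | (x a).isSome}

/-- The image of a partial injective transformation. -/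
def sim {n : ℕ} (x : IS n) : Set (Fin n) := {b | (x.symm b).isSome}

/-- The rank of a partial injective transformation: the cardinality of its image. -/
noncomputable def srank {n : ℕ} (x : IS n) : ℕ := Nat.card (sim x)

/-- The set `A = {1,…,k}` inside `Fin n`, i.e. the first `k` elements. -/
def SetA (n k : ℕ) : Set (Fin n) := {i | (i : ℕ) < k}

/-- The idempotent `e` acting identically on `A`, with `dom e = im e = A`. -/
def sandE (n k : ℕ) : IS n where
  toFun i := if (i : ℕ) < k then some i else none
  invFun i := if (i : ℕ) < k then some i else none
  inv a b := by
    split_ifs with h1 h2 <;>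
      simp_all [Option.mem_def, eq_comm] <;> rintro rfl <;> omega

/-- The sandwich multiplication `x * y = x e y` (left-to-right composition). -/
def smul (n k : ℕ) (x y : IS n) : IS n := (x.trans (sandE n k)).trans y

lemma sandE_apply {n k : ℕ} (i : Fin n) :
    (sandE n k) i = if (i : ℕ) < k then some i else none := rfl

lemma trans_apply' {n : ℕ} (u v : IS n) (t : Fin n) :
    (u.trans v) t = (u t).bind v := rfl

lemma symm_trans_apply' {n : ℕ} (u v : IS n) (b : Fin n) :
    (u.trans v).symm b = (v.symm b).bind u.symm := rfl

/-- rank of a composition is at most the rank of the right factor. -/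
lemma srank_trans_le_right {n : ℕ} (u v : IS n) : srank (u.trans v) ≤ srank v := by
  apply Nat.card_mono (Set.toFinite _)
  intro b hb
  have hb' : ((v.symm b).bind u.symm).isSome := hb
  cases h : v.symm b with
  | none => rw [h] at hb'; simp at hb'
  | some c => exact Option.isSome_iff_exists.2 ⟨c, h⟩

/-- rank of a composition is at most the rank of the left factor. -/
lemma srank_trans_le_left {n : ℕ} (u v : IS n) : srank (u.trans v) ≤ srank u := by
  have key : ∀ b : sim (u.trans v), ∃ c : sim u, v (c : Fin n) = some (b : Fin n) := by
    rintro ⟨b, hb⟩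
    have hb' : ((v.symm b).bind u.symm).isSome := hb
    cases h : v.symm b with
    | none => rw [h] at hb'; simp at hb'
    | some c =>
      rw [h] at hb'
      exact ⟨⟨c, hb'⟩, v.eq_some_iff.mp h⟩
  choose F hF using key
  exact Nat.card_le_card_of_injective F (fun b1 b2 hEq => by
    apply Subtype.ext
    have h1 := hF b1
    have h2 := hF b2
    rw [hEq, h2] at h1
    exact (Option.some_injective _ h1).symm)

/-- for every idempotent `f` of `(IS_n, *)`, the principal two-sided
ideal `IS_n * f * IS_n` equals `{a : rank a ≤ rank f}`. -/
theorem principal_ideal_eq_rank_le (n k : ℕ) (hk : 1 ≤ k) (hkn : k ≤ n)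
    (f : IS n) (hf : smul n k f f = f) :
    {c : IS n | ∃ x y : IS n, smul n k (smul n k x f) y = c} =
      {a : IS n | srank a ≤ srank f} := by
  classical
  -- `f` is a partial identity on a subset of `A`
  have hfd : ∀ t s, f t = some s → s = t ∧ (t : ℕ) < k := by
    intro t s hts
    have h := DFunLike.congr_fun hf t
    simp only [smul] at h
    rw [trans_apply', trans_apply', hts] at h
    rw [show ((some s).bind ⇑(sandE n k)) = (sandE n k) s from rfl, sandE_apply] at h
    by_cases hs : (s : ℕ) < k
    · rw [if_pos hs, show ((some s).bind ⇑f) = f s from rfl] at h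
      -- h : f s = some s, hts : f t = some s
      have h1 : f.symm s = some s := f.eq_some_iff.mpr (h.trans hts.symm ▸ h)
      have h2 : f.symm s = some t := f.eq_some_iff.mpr hts
      have : s = t := Option.some_injective _ (h1.symm.trans h2)
      exact ⟨this, this ▸ hs⟩
    · rw [if_neg hs] at h
      simp [hts] at h
  have hmem : ∀ b, b ∈ sim f ↔ f b = some b := by
    intro b
    constructor
    · intro hb
      obtain ⟨c, hc⟩ := Option.isSome_iff_exists.mp hb
      have hcb : f c = some b := f.eq_some_iff.mp hc
      obtain ⟨rfl, _⟩ := hfd c b hcb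
      exact hcb
    · intro hb
      exact Option.isSome_iff_exists.2 ⟨b, f.eq_some_iff.mpr hb⟩
  ext a
  simp only [Set.mem_setOf_eq]
  constructor
  · rintro ⟨x, y, rfl⟩
    simp only [smul]
    calc srank ((((x.trans (sandE n k)).trans f).trans (sandE n k)).trans y)
        ≤ srank (((x.trans (sandE n k)).trans f).trans (sandE n k)) :=
          srank_trans_le_left _ _
      _ ≤ srank ((x.trans (sandE n k)).trans f) := srank_trans_le_left _ _
      _ ≤ srank f := srank_trans_le_right _ _
  · intro ha
    -- build an embedding of `sim a` into `sim f`
    haveI : Fintype ↥(sim a) := Fintype.ofFinite _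
    haveI : Fintype ↥(sim f) := Fintype.ofFinite _
    have hcard : Fintype.card ↥(sim a) ≤ Fintype.card ↥(sim f) := by
      simpa [srank, Nat.card_eq_fintype_card] using ha
    obtain ⟨g⟩ := Function.Embedding.nonempty_of_card_le hcard
    let g' : ↥(sim a) ↪ Fin n := g.trans (Function.Embedding.subtype _)
    have hg' : ∀ p : ↥(sim a), g' p ∈ sim f := fun p => (g p).2
    let e1 : ↥(sim a) ≃ ↥(Set.range g') := Equiv.ofInjective g' g'.injective
    have hcc : Fintype.card ↥((sim a)ᶜ) = Fintype.card ↥((Set.range g')ᶜ) := by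
      rw [Fintype.card_compl_set, Fintype.card_compl_set, Fintype.card_range]
    let e2 : ↥((sim a)ᶜ) ≃ ↥((Set.range g')ᶜ) := Fintype.equivOfCardEq hcc
    let σ : Equiv.Perm (Fin n) :=
      ((Equiv.Set.sumCompl (sim a)).symm.trans ((e1.sumCongr e2).trans
        (Equiv.Set.sumCompl (Set.range g'))))
    have hσ : ∀ b (hb : b ∈ sim a), σ b ∈ sim f := by
      intro b hb
      have h1 : (Equiv.Set.sumCompl (sim a)).symm b = Sum.inl ⟨b, hb⟩ :=
        Equiv.Set.sumCompl_symm_apply_of_mem hb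
      have : σ b = ((e1 ⟨b, hb⟩ : ↥(Set.range g')) : Fin n) := by
        simp only [σ, Equiv.trans_apply, h1, Equiv.sumCongr_apply, Sum.map_inl,
          Equiv.Set.sumCompl_apply_inl]
      rw [this]
      exact hg' _
    -- the witnesses
    refine ⟨a.trans σ.toPEquiv, σ.symm.toPEquiv, ?_⟩
    set x : IS n := a.trans σ.toPEquiv with hx
    have him : ∀ t b, x t = some b → f b = some b ∧ (b : ℕ) < k := by
      intro t b htb
      rw [hx, trans_apply'] at htb
      obtain ⟨v, hv1, hv2⟩ := Option.bind_eq_some_iff.mp htb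
      rw [Equiv.toPEquiv_apply] at hv2
      have hvb : σ v = b := Option.some_injective _ hv2
      have hvmem : v ∈ sim a :=
        Option.isSome_iff_exists.2 ⟨t, a.eq_some_iff.mpr hv1⟩
      have hbf : b ∈ sim f := hvb ▸ hσ v hvmem
      have hfb : f b = some b := (hmem b).mp hbf
      exact ⟨hfb, (hfd b b hfb).2⟩
    have hxe : x.trans (sandE n k) = x := by
      ext t
      rw [trans_apply']
      cases h : x t with
      | none => rfl
      | some b =>
        obtain ⟨_, hbk⟩ := him t b h
        simp [sandE_apply, hbk]
    have hxf : x.trans f = x := by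
      ext t
      rw [trans_apply']
      cases h : x t with
      | none => rfl
      | some b =>
        obtain ⟨hfb, _⟩ := him t b h
        simp [hfb]
    simp only [smul, hxe, hxf, hx]
    rw [← hx, hxe, hxf, hxe, hx, PEquiv.trans_assoc, ← Equiv.toPEquiv_trans, Equiv.self_trans_symm,
      Equiv.toPEquiv_refl, PEquiv.trans_refl]
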